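/- For all integers n, m ≥ 1, the Bost–Connes maps on the group algebra A = ℚ[ℚ/ℤ] satisfy ρₙ ∘ ρₘ = ρ_{nm}; in particular (ρₙ)_{n≥1} defines an action of the multiplicative semigroup ℕ^× on A by (non-unital) algebra endomorphisms. -/

import Mathlib

open AddMonoidAlgebra

/-- The rational group algebra `A = ℚ[ℚ/ℤ]` of `ℚ/ℤ = AddCircle (1 : ℚ)`. -/
abbrev BC.A : Type := AddMonoidAlgebra ℚ (AddCircle (1 : ℚ))

/-- The Bost–Connes map `ρₙ : A → A`, the `ℚ`-linear map determined on the canonical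
basis elements `e_r = single r 1` by `ρₙ(e_r) = (1/n) ∑_{s : n • s = r} e_s`, the
(finite) sum running over the `n` solutions `s ∈ ℚ/ℤ` of `n • s = r`. -/
noncomputable def BC.rho (n : ℕ) : BC.A →ₗ[ℚ] BC.A :=
  (Finsupp.lift BC.A ℚ (AddCircle (1 : ℚ)) fun r =>
    (n : ℚ)⁻¹ • ∑ᶠ (s : AddCircle (1 : ℚ)) (_ : n • s = r), AddMonoidAlgebra.single s (1 : ℚ))
  ∘ₗ (AddMonoidAlgebra.coeffLinearEquiv ℚ).toLinearMap

lemma BC.fib_finite (n : ℕ) (hn : 1 ≤ n) (r : AddCircle (1 : ℚ)) :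
    {s : AddCircle (1 : ℚ) | n • s = r}.Finite := by
  have hn0 : (n : ℚ) ≠ 0 := Nat.cast_ne_zero.mpr (by omega)
  induction r using QuotientAddGroup.induction_on with
  | H q =>
    apply Set.Finite.subset (Set.finite_range
      (fun k : Fin n => (((q + (k : ℚ)) / n : ℚ) : AddCircle (1 : ℚ))))
    rintro s hs
    induction s using QuotientAddGroup.induction_on with
    | H x =>
      simp only [Set.mem_setOf_eq] at hs
      have hs' : ((n • x : ℚ) : AddCircle (1 : ℚ)) = (q : AddCircle (1 : ℚ)) := hs
      rw [QuotientAddGroup.eq_iff_sub_mem, AddSubgroup.mem_zmultiples_iff] at hs'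
      obtain ⟨j, hj⟩ := hs'
      have hj' : (j : ℚ) = n • x - q := by simpa using hj
      have hnpos : (0 : ℤ) < n := by exact_mod_cast hn
      refine ⟨⟨(j % n).toNat, ?_⟩, ?_⟩
      · rw [Int.toNat_lt (Int.emod_nonneg j hnpos.ne')]
        exact Int.emod_lt_of_pos j hnpos
      · rw [QuotientAddGroup.eq_iff_sub_mem, AddSubgroup.mem_zmultiples_iff]
        refine ⟨-(j / n), ?_⟩
        have hx : x = (q + (j : ℚ)) / n := by
          rw [nsmul_eq_mul] at hj'
          field_simp
          linarith
        have hmod : ((j % n : ℤ) : ℚ) = (((j % n).toNat : ℕ) : ℚ) := by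
          exact_mod_cast (congrArg (fun z : ℤ => (z : ℚ)) (Int.toNat_of_nonneg
            (Int.emod_nonneg j hnpos.ne'))).symm
        have hdm : (j : ℚ) = n * (j / n : ℤ) + ((j % n : ℤ) : ℚ) := by
          exact_mod_cast (Int.mul_ediv_add_emod j n).symm
        push_cast [hx, ← hmod, zsmul_eq_mul]
        field_simp
        linarith [hdm]

lemma BC.union_fib (n m : ℕ) (r : AddCircle (1 : ℚ)) :
    ⋃ s ∈ {s : AddCircle (1 : ℚ) | m • s = r}, {t : AddCircle (1 : ℚ) | n • t = s}
      = {t : AddCircle (1 : ℚ) | (n * m) • t = r} := by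
  ext t
  simp only [Set.mem_iUnion, Set.mem_setOf_eq, exists_prop]
  constructor
  · rintro ⟨s, hs, ht⟩
    rw [mul_comm, mul_smul, ht, hs]
  · intro h
    exact ⟨n • t, by rw [← mul_smul, mul_comm, h], rfl⟩

lemma BC.rho_single (k : ℕ) (x : AddCircle (1 : ℚ)) :
    BC.rho k (AddMonoidAlgebra.single x 1)
      = (k : ℚ)⁻¹ • ∑ᶠ (s : AddCircle (1 : ℚ)) (_ : k • s = x),
          AddMonoidAlgebra.single s (1 : ℚ) := by
  rw [BC.rho, LinearMap.comp_apply, LinearEquiv.coe_coe, AddMonoidAlgebra.coeffLinearEquiv_apply,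
    AddMonoidAlgebra.coeff_single, Finsupp.lift_apply]
  show (Finsupp.single x (1 : ℚ)).sum
      (fun r (c : ℚ) => c • ((k : ℚ)⁻¹ • ∑ᶠ (s : AddCircle (1 : ℚ)) (_ : k • s = r),
        AddMonoidAlgebra.single s (1 : ℚ))) = _
  rw [Finsupp.sum_single_index
    (h := fun r (c : ℚ) => c • ((k : ℚ)⁻¹ • ∑ᶠ (s : AddCircle (1 : ℚ)) (_ : k • s = r),
      AddMonoidAlgebra.single s (1 : ℚ))) (zero_smul ℚ _), one_smul]

/-- For all `n, m ≥ 1`, the Bost–Connes maps on `ℚ[ℚ/ℤ]` satisfy `ρₙ ∘ ρₘ = ρₙₘ`. -/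
theorem BC.rho_comp (n m : ℕ) (hn : 1 ≤ n) (hm : 1 ≤ m) :
    (BC.rho n).comp (BC.rho m) = BC.rho (n * m) := by
  have key : ∀ r : AddCircle (1 : ℚ),
      BC.rho n (BC.rho m (AddMonoidAlgebra.single r 1))
        = BC.rho (n * m) (AddMonoidAlgebra.single r 1) := by
    intro r
    have hFm := BC.fib_finite m hm r
    have hFn : ∀ s, ({t : AddCircle (1 : ℚ) | n • t = s}).Finite :=
      fun s => BC.fib_finite n hn s
    rw [BC.rho_single, map_smul, BC.rho_single]
    have e1 : (∑ᶠ (s : AddCircle (1 : ℚ)) (_ : m • s = r), AddMonoidAlgebra.single s (1 : ℚ))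
        = ∑ s ∈ hFm.toFinset, AddMonoidAlgebra.single s (1 : ℚ) :=
      finsum_mem_eq_finite_toFinset_sum _ hFm
    rw [e1, map_sum]
    have e2 : ∀ s ∈ hFm.toFinset,
        BC.rho n (AddMonoidAlgebra.single s 1)
          = (n : ℚ)⁻¹ • ∑ᶠ (t : AddCircle (1 : ℚ)) (_ : n • t = s),
              AddMonoidAlgebra.single t (1 : ℚ) := fun s _ => BC.rho_single n s
    rw [Finset.sum_congr rfl e2, ← Finset.smul_sum, smul_smul]
    congr 1
    · push_cast
      rw [mul_inv]
      ring
    have e3 : (∑ s ∈ hFm.toFinset, ∑ᶠ (t : AddCircle (1 : ℚ)) (_ : n • t = s),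
          AddMonoidAlgebra.single t (1 : ℚ))
        = ∑ᶠ s ∈ {s : AddCircle (1 : ℚ) | m • s = r},
            ∑ᶠ t ∈ {t : AddCircle (1 : ℚ) | n • t = s}, AddMonoidAlgebra.single t (1 : ℚ) :=
      (finsum_mem_eq_finite_toFinset_sum _ hFm).symm
    rw [e3, ← finsum_mem_biUnion ?hdisj hFm (fun s _ => hFn s), BC.union_fib]
    · simp only [Set.mem_setOf_eq]
    case hdisj =>
      intro s _ s' _ hss'
      refine Set.disjoint_left.mpr ?_
      rintro t ht ht'
      exact hss' (ht ▸ ht' ▸ rfl)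
  refine LinearMap.toAddMonoidHom_injective (AddMonoidAlgebra.addMonoidHom_ext ?_)
  intro r c
  have hc : (AddMonoidAlgebra.single r c : BC.A) = c • AddMonoidAlgebra.single r 1 := by
    rw [AddMonoidAlgebra.smul_single, smul_eq_mul, mul_one]
  simp only [LinearMap.toAddMonoidHom_coe, LinearMap.comp_apply, hc, map_smul]
  exact congrArg (fun z => c • z) (key r)
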